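/- If G = (V,E) is a (2,2)-circuit, then the subgraph of G induced by the set V₃ of vertices of degree 3 contains no cycles. -/

import Mathlib

/-- A graph `G` on the finite vertex type `V` is a `(2,2)`-circuit if
`|E| = 2|V| - 1` and every proper subgraph `(V',E')` with `E'` nonempty
satisfies `|E'| ≤ 2|V'| - 2`. -/
def IsCircuit22 {V : Type*} [Fintype V] (G : SimpleGraph V) : Prop :=
  G.edgeSet.ncard + 1 = 2 * Fintype.card V ∧
  ∀ H : G.Subgraph, (H.verts ≠ Set.univ ∨ H.edgeSet ≠ G.edgeSet) →
    H.edgeSet.Nonempty → H.edgeSet.ncard + 2 ≤ 2 * H.verts.ncard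

/-- In a `(2,2)`-circuit, the subgraph induced by the set `V₃` of vertices of
degree exactly `3` contains no cycles. -/
theorem induced_nodes_acyclic {V : Type*} [Fintype V] [DecidableEq V]
    (G : SimpleGraph V) [DecidableRel G.Adj] (hG : IsCircuit22 G) :
    (G.induce {v : V | G.degree v = 3}).IsAcyclic := by
  set S : Set V := {v : V | G.degree v = 3} with hS
  intro v p hp
  let f : G.induce S ↪g G := SimpleGraph.Embedding.induce S
  have hfv : ∀ y : S, f.toHom y = (y : V) := fun y => rfl
  set q : G.Walk (f.toHom v) (f.toHom v) := p.map f.toHom with hqdef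
  have hq : q.IsCycle := hp.map f.injective
  have h3 : 3 ≤ q.length := hq.three_le_length
  set T : Finset V := q.support.toFinset with hT
  -- every vertex of T has degree 3
  have hdeg : ∀ x ∈ T, G.degree x = 3 := by
    intro x hx
    rw [hT, List.mem_toFinset, hqdef, SimpleGraph.Walk.support_map] at hx
    obtain ⟨y, hy, rfl⟩ := List.mem_map.mp hx
    exact y.2
  -- |T| = length of the cycle
  have htne : q.support.tail ≠ [] := by
    have hl := q.length_support
    intro h
    have : q.support.tail.length = 0 := by rw [h]; rfl
    rw [List.length_tail, hl] at this
    omega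
  have hvtail : f.toHom v ∈ q.support.tail := by
    have h1 : q.support.tail.getLast htne = f.toHom v := by
      rw [List.getLast_tail]
      exact q.getLast_support
    have h2 := List.getLast_mem htne
    rwa [h1] at h2
  have hTeq : T = q.support.tail.toFinset := by
    rw [hT]
    conv_lhs => rw [q.support_eq_cons]
    rw [List.toFinset_cons]
    exact Finset.insert_eq_self.mpr (List.mem_toFinset.mpr hvtail)
  have hTcard : T.card = q.length := by
    rw [hTeq, List.toFinset_card_of_nodup hq.support_nodup, List.length_tail,
      q.length_support]
    omega
  -- cycle edges
  set CE : Finset (Sym2 V) := q.edges.toFinset with hCE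
  have hCEcard : CE.card = q.length := by
    rw [hCE, List.toFinset_card_of_nodup hq.edges_nodup, q.length_edges]
  -- darts with first vertex in T
  set D : Finset G.Dart := Finset.univ.filter (fun d => d.fst ∈ T) with hD
  have hDcard : D.card = 3 * T.card := by
    rw [hD, Finset.card_eq_sum_card_fiberwise
      (s := Finset.univ.filter (fun d : G.Dart => d.fst ∈ T)) (f := fun d : G.Dart => d.fst) (t := T) (fun d hd => (Finset.mem_filter.mp hd).2)]
    have hfib : ∀ x ∈ T, ((Finset.univ.filter (fun d : G.Dart => d.fst ∈ T)).filter
        (fun d : G.Dart => d.fst = x)).card = 3 := by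
      intro x hx
      have : ((Finset.univ.filter (fun d : G.Dart => d.fst ∈ T)).filter
          (fun d : G.Dart => d.fst = x)) = Finset.univ.filter (fun d : G.Dart => d.fst = x) := by
        ext d
        simp only [Finset.mem_filter, Finset.mem_univ, true_and]
        constructor
        · exact fun h => h.2
        · rintro rfl; exact ⟨hx, rfl⟩
      rw [this, SimpleGraph.dart_fst_fiber_card_eq_degree, hdeg x hx]
    rw [Finset.sum_congr rfl hfib, Finset.sum_const, smul_eq_mul, mul_comm]
  -- edges incident to T
  set Einc : Finset (Sym2 V) := G.edgeFinset.filter (fun e => ∃ x ∈ e, x ∈ T) with hEinc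
  have hDmem : ∀ d ∈ D, d.edge ∈ Einc := by
    intro d hd
    rw [hD, Finset.mem_filter] at hd
    rw [hEinc, Finset.mem_filter]
    refine ⟨SimpleGraph.mem_edgeFinset.mpr d.edge_mem, d.fst, ?_, hd.2⟩
    rw [SimpleGraph.Dart.edge]
    exact Sym2.mem_mk_left _ _
  have hDsum : D.card = ∑ e ∈ Einc, (D.filter (fun d => d.edge = e)).card :=
    Finset.card_eq_sum_card_fiberwise hDmem
  have hCEsub : CE ⊆ Einc := by
    intro e he
    rw [hCE, List.mem_toFinset] at he
    rw [hEinc, Finset.mem_filter]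
    refine ⟨SimpleGraph.mem_edgeFinset.mpr (q.edges_subset_edgeSet he), ?_⟩
    induction e with
    | _ a b =>
      exact ⟨a, Sym2.mem_mk_left _ _,
        List.mem_toFinset.mpr (SimpleGraph.Walk.fst_mem_support_of_mem_edges q he)⟩
  -- fibers over cycle edges have ≥ 2 elements
  have hfib2 : ∀ e ∈ CE, 2 ≤ (D.filter (fun d => d.edge = e)).card := by
    intro e he
    rw [hCE, List.mem_toFinset] at he
    induction e with
    | _ a b =>
      have hadj : G.Adj a b := q.edges_subset_edgeSet he
      have haT : a ∈ T := List.mem_toFinset.mpr (q.fst_mem_support_of_mem_edges he)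
      have hbT : b ∈ T := List.mem_toFinset.mpr (q.snd_mem_support_of_mem_edges he)
      set d1 : G.Dart := ⟨(a, b), hadj⟩ with hd1
      set d2 : G.Dart := ⟨(b, a), hadj.symm⟩ with hd2
      have hne : d1 ≠ d2 := by
        intro h
        have := congrArg (fun d : G.Dart => d.fst) h
        exact hadj.ne this
      have hsub : ({d1, d2} : Finset G.Dart) ⊆ D.filter (fun d => d.edge = s(a, b)) := by
        intro d hd
        rw [Finset.mem_insert, Finset.mem_singleton] at hd
        rw [Finset.mem_filter, hD, Finset.mem_filter]
        rcases hd with rfl | rfl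
        · exact ⟨⟨Finset.mem_univ _, haT⟩, rfl⟩
        · exact ⟨⟨Finset.mem_univ _, hbT⟩, Sym2.eq_swap⟩
      calc 2 = ({d1, d2} : Finset G.Dart).card := (Finset.card_pair hne).symm
        _ ≤ _ := Finset.card_le_card hsub
  -- fibers over incident edges are nonempty
  have hfib1 : ∀ e ∈ Einc, 1 ≤ (D.filter (fun d => d.edge = e)).card := by
    intro e he
    rw [hEinc, Finset.mem_filter] at he
    obtain ⟨heE, x, hxe, hxT⟩ := he
    rw [SimpleGraph.mem_edgeFinset] at heE
    induction e with
    | _ a b =>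
      have hadj : G.Adj a b := heE
      rw [Finset.one_le_card]
      rcases Sym2.mem_iff.mp hxe with rfl | rfl
      · exact ⟨⟨(x, b), hadj⟩, by
          rw [Finset.mem_filter, hD, Finset.mem_filter]
          exact ⟨⟨Finset.mem_univ _, hxT⟩, rfl⟩⟩
      · exact ⟨⟨(x, a), hadj.symm⟩, by
          rw [Finset.mem_filter, hD, Finset.mem_filter]
          exact ⟨⟨Finset.mem_univ _, hxT⟩, Sym2.eq_swap⟩⟩
  -- conclude |Einc| ≤ 2 |T|
  have hEincle : Einc.card ≤ 2 * T.card := by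
    have hsplit : ∑ e ∈ Einc \ CE, (D.filter (fun d => d.edge = e)).card
        + ∑ e ∈ CE, (D.filter (fun d => d.edge = e)).card
        = ∑ e ∈ Einc, (D.filter (fun d => d.edge = e)).card :=
      Finset.sum_sdiff hCEsub
    have h2 : 2 * CE.card ≤ ∑ e ∈ CE, (D.filter (fun d => d.edge = e)).card := by
      calc 2 * CE.card = ∑ _e ∈ CE, 2 := by rw [Finset.sum_const, smul_eq_mul, mul_comm]
        _ ≤ _ := Finset.sum_le_sum hfib2
    have h1 : (Einc \ CE).card ≤ ∑ e ∈ Einc \ CE, (D.filter (fun d => d.edge = e)).card := by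
      calc (Einc \ CE).card = ∑ _e ∈ Einc \ CE, 1 := by
            rw [Finset.sum_const, smul_eq_mul, mul_one]
        _ ≤ _ := Finset.sum_le_sum (fun e he => hfib1 e (Finset.mem_sdiff.mp he).1)
    have hcards : (Einc \ CE).card + CE.card = Einc.card :=
      Finset.card_sdiff_add_card_eq_card hCEsub
    omega
  -- relate edgeSet.ncard to edgeFinset.card
  have hEcard : G.edgeSet.ncard = G.edgeFinset.card := by
    rw [Set.ncard_eq_toFinset_card', SimpleGraph.edgeFinset]
  have hvT : f.toHom v ∈ T := List.mem_toFinset.mpr q.start_mem_support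
  by_cases hTuniv : T = Finset.univ
  · -- all degrees 3, forces |V| = 2, contradiction with a cycle of length ≥ 3
    have hs := G.sum_degrees_eq_twice_card_edges
    have hall : ∀ x : V, G.degree x = 3 := fun x => hdeg x (hTuniv ▸ Finset.mem_univ x)
    rw [Finset.sum_congr rfl (fun x _ => hall x), Finset.sum_const, smul_eq_mul,
      mul_comm, Finset.card_univ] at hs
    have hcard : T.card ≤ Fintype.card V := Finset.card_le_univ T
    have hG1 := hG.1
    rw [hEcard] at hG1
    omega
  · -- the subgraph on the complement of T
    set HE : Finset (Sym2 V) := G.edgeFinset.filter (fun e => ¬ ∃ x ∈ e, x ∈ T) with hHE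
    have hpart : Einc.card + HE.card = G.edgeFinset.card :=
      Finset.card_filter_add_card_filter_not _
    set H : G.Subgraph := {
      verts := ↑(Tᶜ : Finset V)
      Adj := fun a b => G.Adj a b ∧ a ∉ T ∧ b ∉ T
      adj_sub := fun h => h.1
      edge_vert := fun h => by
        simp only [Finset.coe_compl, Set.mem_compl_iff, Finset.mem_coe]
        exact h.2.1
      symm := ⟨fun a b h => ⟨h.1.symm, h.2.2, h.2.1⟩⟩ } with hHdef
    have hHedge : H.edgeSet = ↑HE := by
      ext e
      induction e with
      | _ a b =>
        rw [SimpleGraph.Subgraph.mem_edgeSet, Finset.mem_coe, hHE, Finset.mem_filter,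
          SimpleGraph.mem_edgeFinset, SimpleGraph.mem_edgeSet]
        constructor
        · rintro ⟨hadj, haT, hbT⟩
          refine ⟨hadj, ?_⟩
          rintro ⟨x, hx, hxT⟩
          rcases Sym2.mem_iff.mp hx with rfl | rfl
          · exact haT hxT
          · exact hbT hxT
        · rintro ⟨hadj, hno⟩
          exact ⟨hadj, fun haT => hno ⟨a, Sym2.mem_mk_left _ _, haT⟩,
            fun hbT => hno ⟨b, Sym2.mem_mk_right _ _, hbT⟩⟩
    have hHecard : H.edgeSet.ncard = HE.card := by rw [hHedge, Set.ncard_coe_finset]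
    have hHvcard : H.verts.ncard = Fintype.card V - T.card := by
      show (↑(Tᶜ : Finset V) : Set V).ncard = _
      rw [Set.ncard_coe_finset, Finset.card_compl]
    have hTlt : T.card < Fintype.card V := by
      refine lt_of_le_of_ne (Finset.card_le_univ T) ?_
      intro h
      exact hTuniv (Finset.eq_univ_of_card T h)
    have hG1 := hG.1
    rw [hEcard] at hG1
    have hHEpos : 0 < HE.card := by omega
    have hHne : H.edgeSet.Nonempty := by
      rw [hHedge]
      obtain ⟨e, he⟩ := Finset.card_pos.mp hHEpos
      exact ⟨e, he⟩
    have hproper : H.verts ≠ Set.univ := by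
      intro h
      have : f.toHom v ∈ (↑(Tᶜ : Finset V) : Set V) := by
        show f.toHom v ∈ H.verts
        rw [h]; trivial
      rw [Finset.mem_coe, Finset.mem_compl] at this
      exact this hvT
    have := hG.2 H (Or.inl hproper) hHne
    rw [hHecard, hHvcard] at this
    omega
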